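/- Let S1, S2, P' = x_1,…,x_{p'}, Q' = y_1,…,y_{q'} be as in the stated setting. For all indices i < p' and j < q', regardless of whether (x_i,y_j) is intersecting or nonintersecting, rr(S1^{x_i}, S2^{y_j}) = max{ mm(X_i,Y_j) + rr(S1^{x_{i+1}}, S2^{y_{j+1}}), mmb(X_i ∪ {x_{i+1}}, Y_j ∪ {y_{j+1}}, x_{i+1}, y_{j+1}), rr(S1^{x_i}, S2^{y_{j+1}}), mm(x_i, Y_j), rr(S1^{x_{i+1}}, S2^{y_j}), mm(X_i, y_j) }. -/

import Mathlib

set_option linter.unusedSectionVars false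
set_option maxHeartbeats 1600000


/-- A leaf-labeled rooted tree: either a labeled leaf, or an internal
vertex with a list of subtrees. -/
inductive ETree (L : Type) : Type where
  | leaf : L → ETree L
  | node : List (ETree L) → ETree L

namespace ETree

variable {L : Type} [DecidableEq L]

/-- The list of leaf labels of a tree. -/
def labelList : ETree L → List L
  | leaf a => [a]
  | node ts => ts.attach.flatMap fun ⟨t, _⟩ => labelList t

/-- The label set of a tree: the set of its leaf labels. -/
def labelSet (t : ETree L) : Finset L := (labelList t).toFinset

/-- The list of children (as subtrees) of the root of a tree. -/
def children : ETree L → List (ETree L)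
  | leaf _ => []
  | node ts => ts

/-- A rooted tree is homeomorphic if every internal vertex has at least two children. -/
inductive Homeo : ETree L → Prop where
  | leaf (a : L) : Homeo (leaf a)
  | node (ts : List (ETree L)) (hlen : 2 ≤ ts.length) (h : ∀ t ∈ ts, Homeo t) :
      Homeo (node ts)

/-- An evolutionary tree: a homeomorphic rooted tree whose leaves carry distinct labels. -/
def IsEvolutionary (t : ETree L) : Prop := Homeo t ∧ (labelList t).Nodup

/-- `restrict t s` is the homeomorphic version `t‖s` of the tree obtained from `t` by
deleting all leaves with labels outside `s` (contracting away all vertices that are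
not leaves or lowest common ancestors of two leaves); `none` if nothing remains. -/
def restrict : ETree L → Finset L → Option (ETree L)
  | leaf a, s => if a ∈ s then some (leaf a) else none
  | node ts, s =>
      match ts.attach.filterMap (fun ⟨t, _⟩ => restrict t s) with
      | [] => none
      | [u] => some u
      | us => some (node us)

/-- Label-preserving isomorphism of leaf-labeled rooted trees. -/
inductive Iso : ETree L → ETree L → Prop where
  | leaf (a : L) : Iso (leaf a) (leaf a)
  | node (ts us : List (ETree L)) (e : Fin ts.length ≃ Fin us.length)
      (h : ∀ i : Fin ts.length, Iso (ts.get i) (us.get (e i))) :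
      Iso (node ts) (node us)

/-- Isomorphism of possibly-empty trees. -/
def IsoO : Option (ETree L) → Option (ETree L) → Prop
  | none, none => True
  | some t, some u => Iso t u
  | _, _ => False

/-- `rr T₁ T₂`: the number of leaves in a maximum agreement subtree of `T₁` and `T₂`,
i.e. the maximum cardinality of a subset `s` of the common labels such that `T₁‖s`
and `T₂‖s` are label-preservingly isomorphic. -/
noncomputable def rr (t₁ t₂ : ETree L) : ℕ :=
  sSup {k | ∃ s : Finset L, s ⊆ labelSet t₁ ∩ labelSet t₂ ∧ s.card = k ∧
    IsoO (restrict t₁ s) (restrict t₂ s)}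

end ETree

namespace ETree

variable {L : Type} [DecidableEq L]

noncomputable instance : DecidableEq (ETree L) := Classical.decEq _

/-- `mm U V`: the maximum weight of a matching of the complete bipartite graph
`(U, V, U×V)` in which the edge `(u,v)` has weight `rr u v` (note that in our
representation a vertex of a tree is identified with the subtree it roots, so the
weight of `(u,v)` is `rr` of the two rooted subtrees). -/
noncomputable def mm (U V : Finset (ETree L)) : ℕ :=
  sSup {w | ∃ M : Finset (ETree L × ETree L),
    (∀ p ∈ M, p.1 ∈ U ∧ p.2 ∈ V) ∧
    (∀ p ∈ M, ∀ q ∈ M, p ≠ q → p.1 ≠ q.1 ∧ p.2 ≠ q.2) ∧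
    w = ∑ p ∈ M, rr p.1 p.2}

/-- `mmb U V x y`: the maximum weight of a matching of the complete bipartite graph
`(U, V, U×V)` (edge `(u,v)` weighted by `rr u v`) that does not use the edge `(x,y)`. -/
noncomputable def mmb (U V : Finset (ETree L)) (x y : ETree L) : ℕ :=
  sSup {w | ∃ M : Finset (ETree L × ETree L),
    (∀ p ∈ M, p.1 ∈ U ∧ p.2 ∈ V) ∧
    (∀ p ∈ M, ∀ q ∈ M, p ≠ q → p.1 ≠ q.1 ∧ p.2 ≠ q.2) ∧
    (x, y) ∉ M ∧
    w = ∑ p ∈ M, rr p.1 p.2}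

/-- `IsSubtree s t`: `s` occurs as a rooted subtree `t^u` of `t` (vertices of a tree
with distinct leaf labels are identified with the subtrees they root). -/
inductive IsSubtree : ETree L → ETree L → Prop where
  | refl (t : ETree L) : IsSubtree t t
  | child {s c : ETree L} {ts : List (ETree L)} (hc : c ∈ ts) (h : IsSubtree s c) :
      IsSubtree s (node ts)

end ETree

/-- A root path `x₁,…,x_len` of a tree: a vertex-simple path starting at the root and
descending, containing no leaf of the tree.  Vertices are identified with the subtrees
they root, so `vert i` is the subtree `S^{xᵢ}` rooted at the `i`-th vertex of the path
(indices run from `1` to `len`). -/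
structure RootPath (L : Type) where
  /-- The ambient tree. -/
  tree : ETree L
  /-- The number of vertices of the path. -/
  len : ℕ
  /-- The subtree rooted at the `i`-th vertex of the path, for `1 ≤ i ≤ len`. -/
  vert : ℕ → ETree L
  len_pos : 1 ≤ len
  first : vert 1 = tree
  /-- The path contains no leaf of the tree. -/
  no_leaf : ∀ i, 1 ≤ i → i ≤ len → ∃ ts, vert i = ETree.node ts
  /-- Each path vertex after the first is a child of the previous one. -/
  step : ∀ i, 1 ≤ i → i < len → vert (i + 1) ∈ (vert i).children

namespace RootPath

variable {L : Type} [DecidableEq L]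

/-- `offPath P i` is the set of children of the path vertex `xᵢ` that are not on the
path (the set `Xᵢ`). -/
noncomputable def offPath (P : RootPath L) (i : ℕ) : Finset (ETree L) :=
  if i < P.len then ((P.vert i).children.toFinset).erase (P.vert (i + 1))
  else (P.vert i).children.toFinset

end RootPath

/-- `Intersecting P Q i j`: the pair `(xᵢ, y_j)` is intersecting, i.e. `S₁^u` and `S₂^v`
share a leaf label for some `u ∈ Xᵢ` and `v ∈ Y_j`. -/
def Intersecting {L : Type} [DecidableEq L] (P Q : RootPath L) (i j : ℕ) : Prop :=
  ∃ u ∈ P.offPath i, ∃ v ∈ Q.offPath j,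
    (ETree.labelSet u ∩ ETree.labelSet v).Nonempty



namespace ETree
variable {L : Type} [DecidableEq L]

@[elab_as_elim] theorem ind {motive : ETree L → Prop} (hl : ∀ a, motive (.leaf a))
    (hn : ∀ ts, (∀ t ∈ ts, motive t) → motive (.node ts)) : ∀ t, motive t := by
  intro t
  induction t using ETree.rec (motive_2 := fun ts => ∀ t ∈ ts, motive t) with
  | leaf a => exact hl a
  | node ts ih => exact hn ts ih
  | nil => rename_i u hu; exact absurd hu List.not_mem_nil
  | cons t ts iht ihts =>
      rename_i u hu
      rcases List.mem_cons.1 hu with h|h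
      · exact h ▸ iht
      · exact ihts u h

theorem labelList_node (ts : List (ETree L)) : labelList (node ts) = ts.flatMap labelList := by
  rw [labelList, ← List.attach_map_subtype_val ts, List.flatMap_map]
  simp

def ofList : List (ETree L) → Option (ETree L)
  | [] => none
  | [u] => some u
  | us => some (node us)

theorem restrict_node (ts : List (ETree L)) (s : Finset L) :
    restrict (node ts) s = ofList (ts.filterMap (fun t => restrict t s)) := by
  rw [restrict]
  have h : ts.attach.filterMap (fun (x : {t // t ∈ ts}) => restrict x.1 s)
      = ts.filterMap (fun t => restrict t s) := by
    rw [← List.attach_map_subtype_val ts, List.filterMap_map]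
    simp
  rw [h]
  cases h2 : ts.filterMap (fun t => restrict t s) with
  | nil => rfl
  | cons u us => cases us <;> rfl

theorem mem_labelSet_node {a : L} {ts : List (ETree L)} :
    a ∈ labelSet (node ts) ↔ ∃ t ∈ ts, a ∈ labelSet t := by
  simp [labelSet, labelList_node, List.mem_flatMap]

theorem labelSet_subset_of_mem {c : ETree L} {ts : List (ETree L)} (hc : c ∈ ts) :
    labelSet c ⊆ labelSet (node ts) := by
  intro a ha; exact mem_labelSet_node.2 ⟨c, hc, ha⟩

/-- label set of an optional tree -/
def olabelSet : Option (ETree L) → Finset L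
  | none => ∅
  | some t => labelSet t

theorem olabelSet_ofList (l : List (ETree L)) :
    olabelSet (ofList l) = labelSet (node l) := by
  match l with
  | [] =>
      simp only [ofList, olabelSet]
      ext a
      simp [mem_labelSet_node]
  | [u] =>
      ext a
      simp [ofList, olabelSet, mem_labelSet_node]
  | u :: v :: us => rfl

theorem olabelSet_restrict (s : Finset L) :
    ∀ t : ETree L, olabelSet (restrict t s) = labelSet t ∩ s := by
  refine ind ?_ ?_
  · intro a
    by_cases h : a ∈ s <;>
      · simp only [restrict, h, if_pos, if_neg, olabelSet]
        ext b
        simp [labelSet, labelList, h]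
        try tauto
  · intro ts ih
    rw [restrict_node, olabelSet_ofList]
    ext a
    simp only [mem_labelSet_node, Finset.mem_inter, List.mem_filterMap]
    constructor
    · rintro ⟨u, ⟨t, ht, hres⟩, hau⟩
      have := ih t ht
      rw [hres] at this
      have h2 : a ∈ labelSet t ∩ s := this ▸ hau
      exact ⟨⟨t, ht, (Finset.mem_inter.1 h2).1⟩, (Finset.mem_inter.1 h2).2⟩
    · rintro ⟨⟨t, ht, hat⟩, has⟩
      have := ih t ht
      cases hres : restrict t s with
      | none => rw [hres] at this; simp [olabelSet] at this
                exact absurd (Finset.mem_inter.2 ⟨hat, has⟩) (by rw [← this]; simp)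
      | some u =>
          rw [hres] at this
          exact ⟨u, ⟨t, ht, hres⟩, by simp [olabelSet] at this; rw [this]; exact Finset.mem_inter.2 ⟨hat, has⟩⟩

theorem labelSet_nonempty_of_restrict (s : Finset L) :
    ∀ t u : ETree L, restrict t s = some u → (labelSet u).Nonempty := by
  refine ind ?_ ?_
  · intro a u h
    simp only [restrict] at h
    split at h
    · cases h; exact ⟨a, by simp [labelSet, labelList]⟩
    · cases h
  · intro ts ih u h
    rw [restrict_node] at h
    cases hl : ts.filterMap (fun t => restrict t s) with
    | nil => rw [hl] at h; cases h
    | cons v vs =>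
        have hv : v ∈ ts.filterMap (fun t => restrict t s) := by rw [hl]; exact List.mem_cons_self
        obtain ⟨t, ht, hres⟩ := List.mem_filterMap.1 hv
        have hne := ih t ht v hres
        rw [hl] at h
        cases vs with
        | nil => simp [ofList] at h; exact h ▸ hne
        | cons w ws =>
            simp only [ofList] at h
            cases h
            obtain ⟨a, ha⟩ := hne
            exact ⟨a, mem_labelSet_node.2 ⟨v, List.mem_cons_self, ha⟩⟩

theorem restrict_eq_none_iff {t : ETree L} {s : Finset L} :
    restrict t s = none ↔ labelSet t ∩ s = ∅ := by
  constructor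
  · intro h
    have := olabelSet_restrict s t
    rw [h] at this; simpa [olabelSet] using this.symm
  · intro h
    cases hres : restrict t s with
    | none => rfl
    | some u =>
        obtain ⟨a, ha⟩ := labelSet_nonempty_of_restrict s t u hres
        have := olabelSet_restrict s t
        rw [hres] at this
        simp only [olabelSet] at this
        rw [this, h] at ha
        exact absurd ha (Finset.notMem_empty a)

theorem labelSet_restrict_some {t u : ETree L} {s : Finset L} (h : restrict t s = some u) :
    labelSet u = labelSet t ∩ s := by
  have := olabelSet_restrict s t
  rw [h] at this; exact this

theorem restrict_congr {s s' : Finset L} :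
    ∀ t : ETree L, labelSet t ∩ s = labelSet t ∩ s' → restrict t s = restrict t s' := by
  refine ind ?_ ?_
  · intro a h
    have : a ∈ s ↔ a ∈ s' := by
      constructor <;> intro ha
      · have : a ∈ labelSet (leaf a) ∩ s := by simp [labelSet, labelList, ha]
        rw [h] at this; exact (Finset.mem_inter.1 this).2
      · have : a ∈ labelSet (leaf a) ∩ s' := by simp [labelSet, labelList, ha]
        rw [← h] at this; exact (Finset.mem_inter.1 this).2
    simp only [restrict]
    by_cases ha : a ∈ s
    · rw [if_pos ha, if_pos (this.1 ha)]
    · rw [if_neg ha, if_neg (fun h' => ha (this.2 h'))]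
  · intro ts ih h
    rw [restrict_node, restrict_node]
    congr 1
    apply List.filterMap_congr
    intro t ht
    apply ih t ht
    have hsub := labelSet_subset_of_mem ht
    ext a
    constructor <;> intro ha
    · have h1 := Finset.mem_inter.1 ha
      have : a ∈ labelSet (node ts) ∩ s := Finset.mem_inter.2 ⟨hsub h1.1, h1.2⟩
      rw [h] at this
      exact Finset.mem_inter.2 ⟨h1.1, (Finset.mem_inter.1 this).2⟩
    · have h1 := Finset.mem_inter.1 ha
      have : a ∈ labelSet (node ts) ∩ s' := Finset.mem_inter.2 ⟨hsub h1.1, h1.2⟩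
      rw [← h] at this
      exact Finset.mem_inter.2 ⟨h1.1, (Finset.mem_inter.1 this).2⟩

theorem Homeo.of_mem {ts : List (ETree L)} (h : Homeo (ETree.node ts)) {t : ETree L} (ht : t ∈ ts) :
    Homeo t := by cases h with | node _ _ h2 => exact h2 t ht

theorem Homeo.labelSet_nonempty {t : ETree L} (h : Homeo t) : (labelSet t).Nonempty := by
  induction h with
  | leaf a => exact ⟨a, by simp [labelSet, labelList]⟩
  | node ts hlen h ih =>
      match ts, hlen with
      | t :: ts', _ =>
          obtain ⟨a, ha⟩ := ih t (List.mem_cons_self)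
          exact ⟨a, mem_labelSet_node.2 ⟨t, List.mem_cons_self, ha⟩⟩

theorem nodup_of_mem {ts : List (ETree L)} (h : (labelList (node ts)).Nodup)
    {t : ETree L} (ht : t ∈ ts) : (labelList t).Nodup := by
  rw [labelList_node, List.flatMap_def] at h
  exact (List.nodup_flatten.1 h).1 _ (List.mem_map_of_mem ht)

/-- pairwise disjointness of label sets of children, position-based -/

theorem disjoint_labels_of_nodup {ts : List (ETree L)} (h : (labelList (node ts)).Nodup)
    {i j : Fin ts.length} (hij : i ≠ j) :
    Disjoint (labelSet (ts.get i)) (labelSet (ts.get j)) := by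
  rw [labelList_node, List.flatMap_def] at h
  have hp := (List.nodup_flatten.1 h).2
  rw [List.pairwise_iff_get] at hp
  have key : ∀ i j : Fin ts.length, i < j →
      Disjoint (labelSet (ts.get i)) (labelSet (ts.get j)) := by
    intro i j hlt
    have := hp ⟨i, by simp⟩ ⟨j, by simp⟩ (by simpa using hlt)
    simp only [List.get_eq_getElem, List.getElem_map] at this
    rw [Finset.disjoint_left]
    intro a hai haj
    exact this (by simpa [labelSet] using hai) (by simpa [labelSet] using haj)
  rcases lt_or_gt_of_ne hij with h'|h'
  · exact key i j h'
  · exact (key j i h').symm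

theorem filterMap_eq_single {α β : Type*} (l : List α) (f : α → Option β) (n : ℕ)
    (hn : n < l.length)
    (h : ∀ i : ℕ, (hi : i < l.length) → i ≠ n → f (l.get ⟨i, hi⟩) = none) :
    l.filterMap f = (f (l.get ⟨n, hn⟩)).toList := by
  induction l generalizing n with
  | nil => simp at hn
  | cons a l ih =>
      cases n with
      | zero =>
          have hrest : ∀ x ∈ l, f x = none := by
            intro x hx
            obtain ⟨i, hi, rfl⟩ := List.mem_iff_get.1 hx
            exact h (i + 1) (by simpa using Nat.succ_lt_succ i.2) (by simp)
          simp only [List.filterMap_cons]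
          have : l.filterMap f = [] := List.filterMap_eq_nil_iff.2 (fun x hx => by simp [hrest x hx])
          cases hfa : f a <;> simp [this, hfa, List.get]
      | succ m =>
          have h0 : f a = none := h 0 (by simp) (by simp)
          simp only [List.filterMap_cons, h0]
          exact ih m (by simpa using Nat.lt_of_succ_lt_succ hn)
            (fun i hi hne => h (i + 1) (by simpa using Nat.succ_lt_succ hi)
              (fun hcon => hne (by omega)))

theorem disjoint_labels_of_mem {ts : List (ETree L)} (h : (labelList (node ts)).Nodup)
    {t t' : ETree L} (ht : t ∈ ts) (ht' : t' ∈ ts) (hne : t ≠ t') :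
    Disjoint (labelSet t) (labelSet t') := by
  obtain ⟨i, rfl⟩ := List.mem_iff_get.1 ht
  obtain ⟨j, rfl⟩ := List.mem_iff_get.1 ht'
  exact disjoint_labels_of_nodup h (fun hc => hne (by rw [hc]))

theorem restrict_subset_child {ts : List (ETree L)} {c : ETree L} {s : Finset L}
    (hnd : (labelList (node ts)).Nodup) (hc : c ∈ ts) (hs : s ⊆ labelSet c) :
    restrict (node ts) s = restrict c s := by
  obtain ⟨n, hget⟩ := List.mem_iff_get.1 hc
  have hnone : ∀ i : ℕ, (hi : i < ts.length) → i ≠ n.1 →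
      restrict (ts.get ⟨i, hi⟩) s = none := by
    intro i hi hne
    rw [restrict_eq_none_iff]
    have hd : Disjoint (labelSet (ts.get ⟨i, hi⟩)) (labelSet c) := by
      rw [← hget]
      exact disjoint_labels_of_nodup hnd (by intro hcon; exact hne (by
        have := congrArg Fin.val hcon; simpa using this))
    rw [Finset.eq_empty_iff_forall_notMem]
    intro a ha
    have h1 := Finset.mem_inter.1 ha
    exact (Finset.disjoint_left.1 hd) h1.1 (hs h1.2)
  rw [restrict_node, filterMap_eq_single ts _ n.1 n.2 hnone]
  have : ts.get ⟨n.1, n.2⟩ = c := by rw [← hget]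
  rw [this]
  cases restrict c s <;> rfl

theorem Iso.labelSet_eq {t u : ETree L} (h : Iso t u) : labelSet t = labelSet u := by
  induction h with
  | leaf a => rfl
  | node ts us e h ih =>
      ext a
      rw [mem_labelSet_node, mem_labelSet_node]
      constructor
      · rintro ⟨t, ht, hat⟩
        obtain ⟨i, rfl⟩ := List.mem_iff_get.1 ht
        exact ⟨us.get (e i), List.get_mem us _, (ih i) ▸ hat⟩
      · rintro ⟨u, hu, hau⟩
        obtain ⟨j, rfl⟩ := List.mem_iff_get.1 hu
        refine ⟨ts.get (e.symm j), List.get_mem ts _, ?_⟩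
        rw [ih (e.symm j)]
        simpa using hau

theorem Iso.node_inv {ts us : List (ETree L)} (h : Iso (ETree.node ts) (ETree.node us)) :
    ∃ e : Fin ts.length ≃ Fin us.length, ∀ i, Iso (ts.get i) (us.get (e i)) := by
  cases h with
  | node _ _ e h => exact ⟨e, h⟩

theorem isoO_ofList {l₁ l₂ : List (ETree L)} (e : Fin l₁.length ≃ Fin l₂.length)
    (h : ∀ i, Iso (l₁.get i) (l₂.get (e i))) : IsoO (ofList l₁) (ofList l₂) := by
  have hlen : l₁.length = l₂.length := by
    have := Fintype.card_fin l₁.length ▸ Fintype.card_fin l₂.length ▸ Fintype.card_congr e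
    simpa using this
  match l₁, l₂, hlen with
  | [], [], _ => trivial
  | [u], [v], _ =>
      have := h ⟨0, by simp⟩
      have he : (e ⟨0, by simp⟩) = ⟨0, by simp⟩ := by
        apply Fin.ext
        have h2 := (e ⟨0, by simp⟩).2
        simp at h2
        simp [h2]
      rw [he] at this
      exact this
  | u :: u' :: us, v :: v' :: vs, _ =>
      exact Iso.node _ _ e h

end ETree


namespace ETree
variable {L : Type} [DecidableEq L]

theorem restrict_empty (t : ETree L) : restrict t ∅ = none :=
  restrict_eq_none_iff.2 (by simp)

/-- the defining set of `rr` -/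
def rrSet (t₁ t₂ : ETree L) : Set ℕ :=
  {k | ∃ s : Finset L, s ⊆ labelSet t₁ ∩ labelSet t₂ ∧ s.card = k ∧
    IsoO (restrict t₁ s) (restrict t₂ s)}

theorem rr_eq_sSup (t₁ t₂ : ETree L) : rr t₁ t₂ = sSup (rrSet t₁ t₂) := rfl

theorem rrSet_nonempty (t₁ t₂ : ETree L) : (rrSet t₁ t₂).Nonempty :=
  ⟨0, ∅, by simp, by simp, by rw [restrict_empty, restrict_empty]; trivial⟩

theorem rrSet_bddAbove (t₁ t₂ : ETree L) : BddAbove (rrSet t₁ t₂) := by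
  refine ⟨(labelSet t₁ ∩ labelSet t₂).card, ?_⟩
  rintro k ⟨s, hsub, rfl, _⟩
  exact Finset.card_le_card hsub

theorem le_rr {t₁ t₂ : ETree L} {s : Finset L} (h₁ : s ⊆ labelSet t₁ ∩ labelSet t₂)
    (h₂ : IsoO (restrict t₁ s) (restrict t₂ s)) : s.card ≤ rr t₁ t₂ :=
  le_csSup (rrSet_bddAbove t₁ t₂) ⟨s, h₁, rfl, h₂⟩

theorem rr_le {t₁ t₂ : ETree L} {n : ℕ}
    (h : ∀ s : Finset L, s ⊆ labelSet t₁ ∩ labelSet t₂ →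
      IsoO (restrict t₁ s) (restrict t₂ s) → s.card ≤ n) : rr t₁ t₂ ≤ n := by
  refine csSup_le (rrSet_nonempty t₁ t₂) ?_
  rintro k ⟨s, hsub, rfl, hiso⟩
  exact h s hsub hiso

theorem rr_spec (t₁ t₂ : ETree L) : ∃ s : Finset L, s ⊆ labelSet t₁ ∩ labelSet t₂ ∧
    s.card = rr t₁ t₂ ∧ IsoO (restrict t₁ s) (restrict t₂ s) :=
  Nat.sSup_mem (rrSet_nonempty t₁ t₂) (rrSet_bddAbove t₁ t₂)

/-- the defining set of `mm` -/
def mmSet (U V : Finset (ETree L)) : Set ℕ :=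
  {w | ∃ M : Finset (ETree L × ETree L),
    (∀ p ∈ M, p.1 ∈ U ∧ p.2 ∈ V) ∧
    (∀ p ∈ M, ∀ q ∈ M, p ≠ q → p.1 ≠ q.1 ∧ p.2 ≠ q.2) ∧
    w = ∑ p ∈ M, rr p.1 p.2}

theorem mm_eq_sSup (U V : Finset (ETree L)) : mm U V = sSup (mmSet U V) := rfl

theorem mmSet_nonempty (U V : Finset (ETree L)) : (mmSet U V).Nonempty :=
  ⟨0, ∅, by simp, by simp, by simp⟩

theorem mmSet_bddAbove (U V : Finset (ETree L)) : BddAbove (mmSet U V) := by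
  refine ⟨∑ p ∈ U ×ˢ V, rr p.1 p.2, ?_⟩
  rintro k ⟨M, hM, _, rfl⟩
  refine Finset.sum_le_sum_of_subset ?_
  intro p hp
  exact Finset.mem_product.2 (hM p hp)

theorem le_mm {U V : Finset (ETree L)} {M : Finset (ETree L × ETree L)}
    (h₁ : ∀ p ∈ M, p.1 ∈ U ∧ p.2 ∈ V)
    (h₂ : ∀ p ∈ M, ∀ q ∈ M, p ≠ q → p.1 ≠ q.1 ∧ p.2 ≠ q.2) :
    ∑ p ∈ M, rr p.1 p.2 ≤ mm U V :=
  le_csSup (mmSet_bddAbove U V) ⟨M, h₁, h₂, rfl⟩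

theorem mm_spec (U V : Finset (ETree L)) : ∃ M : Finset (ETree L × ETree L),
    (∀ p ∈ M, p.1 ∈ U ∧ p.2 ∈ V) ∧
    (∀ p ∈ M, ∀ q ∈ M, p ≠ q → p.1 ≠ q.1 ∧ p.2 ≠ q.2) ∧
    mm U V = ∑ p ∈ M, rr p.1 p.2 :=
  Nat.sSup_mem (mmSet_nonempty U V) (mmSet_bddAbove U V)

/-- the defining set of `mmb` -/
def mmbSet (U V : Finset (ETree L)) (x y : ETree L) : Set ℕ :=
  {w | ∃ M : Finset (ETree L × ETree L),
    (∀ p ∈ M, p.1 ∈ U ∧ p.2 ∈ V) ∧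
    (∀ p ∈ M, ∀ q ∈ M, p ≠ q → p.1 ≠ q.1 ∧ p.2 ≠ q.2) ∧
    (x, y) ∉ M ∧
    w = ∑ p ∈ M, rr p.1 p.2}

theorem mmb_eq_sSup (U V : Finset (ETree L)) (x y : ETree L) :
    mmb U V x y = sSup (mmbSet U V x y) := rfl

theorem mmbSet_nonempty (U V : Finset (ETree L)) (x y : ETree L) :
    (mmbSet U V x y).Nonempty := ⟨0, ∅, by simp, by simp, by simp, by simp⟩

theorem mmbSet_bddAbove (U V : Finset (ETree L)) (x y : ETree L) :
    BddAbove (mmbSet U V x y) := by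
  refine ⟨∑ p ∈ U ×ˢ V, rr p.1 p.2, ?_⟩
  rintro k ⟨M, hM, _, _, rfl⟩
  refine Finset.sum_le_sum_of_subset ?_
  intro p hp
  exact Finset.mem_product.2 (hM p hp)

theorem le_mmb {U V : Finset (ETree L)} {x y : ETree L} {M : Finset (ETree L × ETree L)}
    (h₁ : ∀ p ∈ M, p.1 ∈ U ∧ p.2 ∈ V)
    (h₂ : ∀ p ∈ M, ∀ q ∈ M, p ≠ q → p.1 ≠ q.1 ∧ p.2 ≠ q.2)
    (h₃ : (x, y) ∉ M) :
    ∑ p ∈ M, rr p.1 p.2 ≤ mmb U V x y :=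
  le_csSup (mmbSet_bddAbove U V x y) ⟨M, h₁, h₂, h₃, rfl⟩

theorem mmb_spec (U V : Finset (ETree L)) (x y : ETree L) :
    ∃ M : Finset (ETree L × ETree L),
    (∀ p ∈ M, p.1 ∈ U ∧ p.2 ∈ V) ∧
    (∀ p ∈ M, ∀ q ∈ M, p ≠ q → p.1 ≠ q.1 ∧ p.2 ≠ q.2) ∧
    (x, y) ∉ M ∧
    mmb U V x y = ∑ p ∈ M, rr p.1 p.2 :=
  Nat.sSup_mem (mmbSet_nonempty U V x y) (mmbSet_bddAbove U V x y)

theorem children_nodup {ts : List (ETree L)} (hH : Homeo (node ts))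
    (hnd : (labelList (node ts)).Nodup) : ts.Nodup := by
  rw [List.nodup_iff_injective_get]
  intro i j hij
  by_contra hne
  have hd := disjoint_labels_of_nodup hnd hne
  rw [hij] at hd
  obtain ⟨a, ha⟩ := (hH.of_mem (List.get_mem ts _)).labelSet_nonempty (t := ts.get j)
  exact (Finset.disjoint_left.1 hd) ha ha

end ETree


namespace ETree
variable {L : Type} [DecidableEq L]

theorem nodup_filterMap_of {α β : Type*} [DecidableEq β] {l : List α} {f : α → Option β}
    (hl : l.Nodup)
    (h : ∀ a ∈ l, ∀ a' ∈ l, ∀ b, f a = some b → f a' = some b → a = a') :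
    (l.filterMap f).Nodup := by
  induction l with
  | nil => simp
  | cons a l ih =>
      rw [List.filterMap_cons]
      have hl' := (List.nodup_cons.1 hl).2
      have hrec := ih hl' (fun x hx y hy b hxb hyb =>
        h x (List.mem_cons_of_mem _ hx) y (List.mem_cons_of_mem _ hy) b hxb hyb)
      cases hfa : f a with
      | none => exact hrec
      | some b =>
          rw [List.nodup_cons]
          refine ⟨?_, hrec⟩
          intro hbmem
          obtain ⟨a', ha', hfa'⟩ := List.mem_filterMap.1 hbmem
          have := h a (List.mem_cons_self) a' (List.mem_cons_of_mem _ ha') b hfa hfa'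
          exact (List.nodup_cons.1 hl).1 (this ▸ ha')

theorem glue {ts us : List (ETree L)}
    (hH1 : Homeo (node ts)) (hH2 : Homeo (node us))
    (hnd1 : (labelList (node ts)).Nodup) (hnd2 : (labelList (node us)).Nodup)
    (M : Finset (ETree L × ETree L))
    (hM : ∀ p ∈ M, p.1 ∈ ts ∧ p.2 ∈ us)
    (hinj : ∀ p ∈ M, ∀ q ∈ M, p ≠ q → p.1 ≠ q.1 ∧ p.2 ≠ q.2)
    (σ : ETree L × ETree L → Finset L)
    (hσsub : ∀ p ∈ M, σ p ⊆ labelSet p.1 ∩ labelSet p.2)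
    (hσiso : ∀ p ∈ M, IsoO (restrict p.1 (σ p)) (restrict p.2 (σ p))) :
    ∃ s : Finset L, s ⊆ labelSet (node ts) ∩ labelSet (node us) ∧
      s.card = ∑ p ∈ M, (σ p).card ∧
      IsoO (restrict (node ts) s) (restrict (node us) s) := by
  classical
  set s : Finset L := M.biUnion σ with hs
  have hσ1 : ∀ p ∈ M, σ p ⊆ labelSet p.1 := fun p hp a ha =>
    (Finset.mem_inter.1 (hσsub p hp ha)).1
  have hσ2 : ∀ p ∈ M, σ p ⊆ labelSet p.2 := fun p hp a ha =>
    (Finset.mem_inter.1 (hσsub p hp ha)).2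
  have hsub : s ⊆ labelSet (node ts) ∩ labelSet (node us) := by
    intro a ha
    obtain ⟨p, hp, hap⟩ := Finset.mem_biUnion.1 ha
    exact Finset.mem_inter.2 ⟨labelSet_subset_of_mem (hM p hp).1 (hσ1 p hp hap),
      labelSet_subset_of_mem (hM p hp).2 (hσ2 p hp hap)⟩
  have hdisj : ∀ p ∈ M, ∀ q ∈ M, p ≠ q → Disjoint (σ p) (σ q) := by
    intro p hp q hq hne
    have hd := disjoint_labels_of_mem hnd1 (hM p hp).1 (hM q hq).1 (hinj p hp q hq hne).1
    rw [Finset.disjoint_left] at hd ⊢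
    intro a h1 h2
    exact hd (hσ1 p hp h1) (hσ1 q hq h2)
  have hcard : s.card = ∑ p ∈ M, (σ p).card := Finset.card_biUnion hdisj
  refine ⟨s, hsub, hcard, ?_⟩
  -- restriction of matched children
  have key1 : ∀ p ∈ M, restrict p.1 s = restrict p.1 (σ p) := by
    intro p hp
    apply restrict_congr
    ext a
    simp only [Finset.mem_inter]
    constructor
    · rintro ⟨ha1, has⟩
      obtain ⟨q, hq, haq⟩ := Finset.mem_biUnion.1 has
      rcases eq_or_ne q p with rfl|hne
      · exact ⟨ha1, haq⟩
      · exfalso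
        have hd := disjoint_labels_of_mem hnd1 (hM q hq).1 (hM p hp).1 (hinj q hq p hp hne).1
        exact (Finset.disjoint_left.1 hd) (hσ1 q hq haq) ha1
    · rintro ⟨ha1, haσ⟩
      exact ⟨ha1, Finset.mem_biUnion.2 ⟨p, hp, haσ⟩⟩
  have key2 : ∀ p ∈ M, restrict p.2 s = restrict p.2 (σ p) := by
    intro p hp
    apply restrict_congr
    ext a
    simp only [Finset.mem_inter]
    constructor
    · rintro ⟨ha1, has⟩
      obtain ⟨q, hq, haq⟩ := Finset.mem_biUnion.1 has
      rcases eq_or_ne q p with rfl|hne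
      · exact ⟨ha1, haq⟩
      · exfalso
        have hd := disjoint_labels_of_mem hnd2 (hM q hq).2 (hM p hp).2 (hinj q hq p hp hne).2
        exact (Finset.disjoint_left.1 hd) (hσ2 q hq haq) ha1
    · rintro ⟨ha1, haσ⟩
      exact ⟨ha1, Finset.mem_biUnion.2 ⟨p, hp, haσ⟩⟩
  have key1' : ∀ c ∈ ts, (∀ p ∈ M, p.1 ≠ c) → restrict c s = none := by
    intro c hc hno
    rw [restrict_eq_none_iff, Finset.eq_empty_iff_forall_notMem]
    intro a ha
    obtain ⟨hac, has⟩ := Finset.mem_inter.1 ha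
    obtain ⟨q, hq, haq⟩ := Finset.mem_biUnion.1 has
    have hd := disjoint_labels_of_mem hnd1 (hM q hq).1 hc (hno q hq)
    exact (Finset.disjoint_left.1 hd) (hσ1 q hq haq) hac
  have key2' : ∀ d ∈ us, (∀ p ∈ M, p.2 ≠ d) → restrict d s = none := by
    intro d hd hno
    rw [restrict_eq_none_iff, Finset.eq_empty_iff_forall_notMem]
    intro a ha
    obtain ⟨had, has⟩ := Finset.mem_inter.1 ha
    obtain ⟨q, hq, haq⟩ := Finset.mem_biUnion.1 has
    have hdd := disjoint_labels_of_mem hnd2 (hM q hq).2 hd (hno q hq)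
    exact (Finset.disjoint_left.1 hdd) (hσ2 q hq haq) had
  -- label sets of restricted matched children
  have hlab1 : ∀ p ∈ M, ∀ u, restrict p.1 (σ p) = some u → labelSet u = σ p := by
    intro p hp u hu
    rw [labelSet_restrict_some hu, Finset.inter_eq_right.2 (hσ1 p hp)]
  have hlab2 : ∀ p ∈ M, ∀ u, restrict p.2 (σ p) = some u → labelSet u = σ p := by
    intro p hp u hu
    rw [labelSet_restrict_some hu, Finset.inter_eq_right.2 (hσ2 p hp)]
  have hsome_iff : ∀ p ∈ M, (restrict p.1 (σ p)).isSome ↔ (restrict p.2 (σ p)).isSome := by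
    intro p hp
    have h := hσiso p hp
    match h1 : restrict p.1 (σ p), h2 : restrict p.2 (σ p), h with
    | none, none, _ => simp
    | some t, some u, _ => simp
    | none, some u, h => exact (h : False).elim
    | some t, none, h => exact (h : False).elim
  set Mpl : Finset (ETree L × ETree L) := M.filter (fun p => (restrict p.1 (σ p)).isSome)
    with hMp
  have hMpM : ∀ p ∈ Mpl, p ∈ M := fun p hp => (Finset.mem_filter.1 hp).1
  set l₁ : List (ETree L) := ts.filterMap (fun t => restrict t s) with hl₁
  set l₂ : List (ETree L) := us.filterMap (fun t => restrict t s) with hl₂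
  -- nodup for the two filtered lists
  have hinj1 : ∀ c ∈ ts, ∀ c' ∈ ts, ∀ x, restrict c s = some x → restrict c' s = some x →
      c = c' := by
    intro c hc c' hc' x h1 h2
    by_contra hne
    have hd := disjoint_labels_of_mem hnd1 hc hc' hne
    obtain ⟨a, ha⟩ := labelSet_nonempty_of_restrict s c x h1
    have h1' := labelSet_restrict_some h1
    have h2' := labelSet_restrict_some h2
    have hac : a ∈ labelSet c := (Finset.mem_inter.1 (h1' ▸ ha)).1
    have hac' : a ∈ labelSet c' := (Finset.mem_inter.1 (h2' ▸ ha)).1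
    exact (Finset.disjoint_left.1 hd) hac hac'
  have hinj2 : ∀ d ∈ us, ∀ d' ∈ us, ∀ x, restrict d s = some x → restrict d' s = some x →
      d = d' := by
    intro c hc c' hc' x h1 h2
    by_contra hne
    have hd := disjoint_labels_of_mem hnd2 hc hc' hne
    obtain ⟨a, ha⟩ := labelSet_nonempty_of_restrict s c x h1
    have h1' := labelSet_restrict_some h1
    have h2' := labelSet_restrict_some h2
    exact (Finset.disjoint_left.1 hd) (Finset.mem_inter.1 (h1' ▸ ha)).1
      (Finset.mem_inter.1 (h2' ▸ ha)).1
  have hnodl₁ : l₁.Nodup := nodup_filterMap_of (children_nodup hH1 hnd1) hinj1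
  have hnodl₂ : l₂.Nodup := nodup_filterMap_of (children_nodup hH2 hnd2) hinj2
  -- Option.isSome facts
  have hsomeS1 : ∀ p, (hp : p ∈ Mpl) → (restrict p.1 s).isSome := by
    intro p hp
    rw [key1 p (hMpM p hp)]
    exact (Finset.mem_filter.1 hp).2
  have hsomeS2 : ∀ p, (hp : p ∈ Mpl) → (restrict p.2 s).isSome := by
    intro p hp
    rw [key2 p (hMpM p hp)]
    exact (hsome_iff p (hMpM p hp)).1 (Finset.mem_filter.1 hp).2
  -- the two bijections
  let F1 : {p // p ∈ Mpl} → {x // x ∈ l₁} := fun p =>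
    ⟨(restrict p.1.1 s).get (hsomeS1 p.1 p.2),
     List.mem_filterMap.2 ⟨p.1.1, (hM p.1 (hMpM p.1 p.2)).1, (Option.some_get _).symm ▸ rfl⟩⟩
  let F2 : {p // p ∈ Mpl} → {x // x ∈ l₂} := fun p =>
    ⟨(restrict p.1.2 s).get (hsomeS2 p.1 p.2),
     List.mem_filterMap.2 ⟨p.1.2, (hM p.1 (hMpM p.1 p.2)).2, (Option.some_get _).symm ▸ rfl⟩⟩
  have hF1 : ∀ p : {p // p ∈ Mpl}, restrict p.1.1 s = some (F1 p).1 :=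
    fun p => (Option.some_get (hsomeS1 p.1 p.2)).symm
  have hF2 : ∀ p : {p // p ∈ Mpl}, restrict p.1.2 s = some (F2 p).1 :=
    fun p => (Option.some_get (hsomeS2 p.1 p.2)).symm
  have hσne : ∀ p, (hp : p ∈ Mpl) → (σ p).Nonempty := by
    intro p hp
    have h1 := hF1 ⟨p, hp⟩
    rw [key1 p (hMpM p hp)] at h1
    obtain ⟨a, ha⟩ := labelSet_nonempty_of_restrict _ _ _ h1
    rw [hlab1 p (hMpM p hp) _ h1] at ha
    exact ⟨a, ha⟩
  have hlabF1 : ∀ p : {p // p ∈ Mpl}, labelSet (F1 p).1 = σ p.1 := by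
    intro p
    have h1 := hF1 p
    rw [key1 p.1 (hMpM p.1 p.2)] at h1
    exact hlab1 p.1 (hMpM p.1 p.2) _ h1
  have hlabF2 : ∀ p : {p // p ∈ Mpl}, labelSet (F2 p).1 = σ p.1 := by
    intro p
    have h1 := hF2 p
    rw [key2 p.1 (hMpM p.1 p.2)] at h1
    exact hlab2 p.1 (hMpM p.1 p.2) _ h1
  have hbij1 : Function.Bijective F1 := by
    constructor
    · intro p q hpq
      by_contra hne
      have hne' : p.1 ≠ q.1 := fun h => hne (Subtype.ext h)
      have hd := hdisj p.1 (hMpM p.1 p.2) q.1 (hMpM q.1 q.2) hne'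
      obtain ⟨a, ha⟩ := hσne p.1 p.2
      have ha' : a ∈ σ q.1 := by
        have h1 := hlabF1 p
        have h2 := hlabF1 q
        rw [hpq] at h1
        have h3 : σ q.1 = σ p.1 := h2.symm.trans h1
        rw [h3]
        exact ha
      exact (Finset.disjoint_left.1 hd) ha ha'
    · intro x
      obtain ⟨c, hc, hcx⟩ := List.mem_filterMap.1 x.2
      by_cases hex : ∃ p ∈ M, p.1 = c
      · obtain ⟨p, hp, hpc⟩ := hex
        have h1 : restrict p.1 s = some x.1 := by rw [hpc]; exact hcx
        have hps : (restrict p.1 (σ p)).isSome := by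
          rw [← key1 p hp, h1]; rfl
        have hpMp : p ∈ Mpl := Finset.mem_filter.2 ⟨hp, hps⟩
        refine ⟨⟨p, hpMp⟩, ?_⟩
        apply Subtype.ext
        have := hF1 ⟨p, hpMp⟩
        rw [h1] at this
        exact (Option.some_injective _ this.symm)
      · exfalso
        push_neg at hex
        rw [key1' c hc hex] at hcx
        cases hcx
  have hbij2 : Function.Bijective F2 := by
    constructor
    · intro p q hpq
      by_contra hne
      have hne' : p.1 ≠ q.1 := fun h => hne (Subtype.ext h)
      have hd := hdisj p.1 (hMpM p.1 p.2) q.1 (hMpM q.1 q.2) hne'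
      obtain ⟨a, ha⟩ := hσne p.1 p.2
      have ha' : a ∈ σ q.1 := by
        have h1 := hlabF2 p
        have h2 := hlabF2 q
        rw [hpq] at h1
        have h3 : σ q.1 = σ p.1 := h2.symm.trans h1
        rw [h3]
        exact ha
      exact (Finset.disjoint_left.1 hd) ha ha'
    · intro x
      obtain ⟨d, hd, hdx⟩ := List.mem_filterMap.1 x.2
      by_cases hex : ∃ p ∈ M, p.2 = d
      · obtain ⟨p, hp, hpd⟩ := hex
        have h1 : restrict p.2 s = some x.1 := by rw [hpd]; exact hdx
        have hps2 : (restrict p.2 (σ p)).isSome := by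
          rw [← key2 p hp, h1]; rfl
        have hps : (restrict p.1 (σ p)).isSome := (hsome_iff p hp).2 hps2
        have hpMp : p ∈ Mpl := Finset.mem_filter.2 ⟨hp, hps⟩
        refine ⟨⟨p, hpMp⟩, ?_⟩
        apply Subtype.ext
        have := hF2 ⟨p, hpMp⟩
        rw [h1] at this
        exact (Option.some_injective _ this.symm)
      · exfalso
        push_neg at hex
        rw [key2' d hd hex] at hdx
        cases hdx
  let E1 : {p // p ∈ Mpl} ≃ {x // x ∈ l₁} := Equiv.ofBijective F1 hbij1
  let E2 : {p // p ∈ Mpl} ≃ {x // x ∈ l₂} := Equiv.ofBijective F2 hbij2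
  let G1 : Fin l₁.length ≃ {x // x ∈ l₁} := List.Nodup.getEquiv l₁ hnodl₁
  let G2 : Fin l₂.length ≃ {x // x ∈ l₂} := List.Nodup.getEquiv l₂ hnodl₂
  let e : Fin l₁.length ≃ Fin l₂.length := G1.trans (E1.symm.trans (E2.trans G2.symm))
  have hiso : ∀ i : Fin l₁.length, Iso (l₁.get i) (l₂.get (e i)) := by
    intro i
    set p := E1.symm (G1 i) with hpdef
    have h1 : F1 p = G1 i := Equiv.apply_symm_apply E1 (G1 i)
    have hx1 : (F1 p).1 = l₁.get i := by rw [h1]; rfl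
    have he : e i = G2.symm (E2 p) := rfl
    have hx2 : l₂.get (e i) = (E2 p).1 := by
      rw [he]
      have h2 := Equiv.apply_symm_apply G2 (E2 p)
      calc l₂.get (G2.symm (E2 p)) = (G2 (G2.symm (E2 p))).1 := rfl
        _ = (E2 p).1 := by rw [h2]
    have hr1 : restrict p.1.1 s = some (l₁.get i) := by rw [hF1 p, hx1]
    have hr2 : restrict p.1.2 s = some (l₂.get (e i)) := by rw [hF2 p]; rw [hx2]; rfl
    have hiso' := hσiso p.1 (hMpM p.1 p.2)
    rw [← key1 p.1 (hMpM p.1 p.2), ← key2 p.1 (hMpM p.1 p.2), hr1, hr2] at hiso'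
    exact hiso'
  rw [restrict_node, restrict_node]
  exact isoO_ofList e hiso

end ETree


namespace ETree
variable {L : Type} [DecidableEq L]

theorem restrict_inj_of_nodup {ts : List (ETree L)} (hnd : (labelList (node ts)).Nodup)
    {s : Finset L} :
    ∀ c ∈ ts, ∀ c' ∈ ts, ∀ x, restrict c s = some x → restrict c' s = some x → c = c' := by
  intro c hc c' hc' x h1 h2
  by_contra hne
  have hd := disjoint_labels_of_mem hnd hc hc' hne
  obtain ⟨a, ha⟩ := labelSet_nonempty_of_restrict s c x h1
  have h1' := labelSet_restrict_some h1
  have h2' := labelSet_restrict_some h2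
  exact (Finset.disjoint_left.1 hd) (Finset.mem_inter.1 (h1' ▸ ha)).1
    (Finset.mem_inter.1 (h2' ▸ ha)).1

theorem subset_child_of_single {us : List (ETree L)} (hnd : (labelList (node us)).Nodup)
    {s : Finset L} (hs : s ⊆ labelSet (node us)) {v : ETree L}
    (hc : us.filterMap (fun t => restrict t s) = [v]) :
    ∃ d ∈ us, s ⊆ labelSet d := by
  have hv : v ∈ us.filterMap (fun t => restrict t s) := by
    rw [hc]; exact List.mem_cons_self
  obtain ⟨d, hd, hdv⟩ := List.mem_filterMap.1 hv
  refine ⟨d, hd, ?_⟩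
  intro a ha
  obtain ⟨d', hd', had'⟩ := mem_labelSet_node.1 (hs ha)
  cases hres : restrict d' s with
  | none =>
      rw [restrict_eq_none_iff] at hres
      exact absurd hres (by
        rw [Finset.eq_empty_iff_forall_notMem]
        push_neg
        exact ⟨a, Finset.mem_inter.2 ⟨had', ha⟩⟩)
  | some v' =>
      have hv' : v' ∈ us.filterMap (fun t => restrict t s) :=
        List.mem_filterMap.2 ⟨d', hd', hres⟩
      rw [hc] at hv'
      have : v' = v := by simpa using hv'
      subst this
      have : d' = d := restrict_inj_of_nodup hnd d' hd' d hd v' hres hdv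
      exact this ▸ had'

theorem homeo_children_ne_nil {ts : List (ETree L)} (hH : Homeo (node ts)) : ts ≠ [] := by
  cases hH with
  | node _ hlen _ =>
      intro h
      subst h
      simp at hlen

/-- main decomposition: a matching from an isomorphism between two node restrictions -/
theorem split_matching {ts us : List (ETree L)}
    (hH1 : Homeo (node ts)) (hH2 : Homeo (node us))
    (hnd1 : (labelList (node ts)).Nodup) (hnd2 : (labelList (node us)).Nodup)
    {s : Finset L} (hs1 : s ⊆ labelSet (node ts)) (hs2 : s ⊆ labelSet (node us))
    {l₁ l₂ : List (ETree L)}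
    (hc1 : ts.filterMap (fun t => restrict t s) = l₁)
    (hc2 : us.filterMap (fun t => restrict t s) = l₂)
    (e : Fin l₁.length ≃ Fin l₂.length)
    (hIso : ∀ i, Iso (l₁.get i) (l₂.get (e i))) :
    ∃ M : Finset (ETree L × ETree L),
      (∀ p ∈ M, p.1 ∈ ts ∧ p.2 ∈ us) ∧
      (∀ p ∈ M, ∀ q ∈ M, p ≠ q → p.1 ≠ q.1 ∧ p.2 ≠ q.2) ∧
      s.card ≤ ∑ p ∈ M, rr p.1 p.2 := by
  classical
  have hex1 : ∀ i : Fin l₁.length, ∃ c, c ∈ ts ∧ restrict c s = some (l₁.get i) := by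
    intro i
    have : l₁.get i ∈ ts.filterMap (fun t => restrict t s) := by
      rw [hc1]; exact List.get_mem l₁ _
    obtain ⟨c, hcts, hcr⟩ := List.mem_filterMap.1 this
    exact ⟨c, hcts, hcr⟩
  have hex2 : ∀ j : Fin l₂.length, ∃ d, d ∈ us ∧ restrict d s = some (l₂.get j) := by
    intro j
    have : l₂.get j ∈ us.filterMap (fun t => restrict t s) := by
      rw [hc2]; exact List.get_mem l₂ _
    obtain ⟨d, hdus, hdr⟩ := List.mem_filterMap.1 this
    exact ⟨d, hdus, hdr⟩
  choose c hcts hcr using hex1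
  choose d hdus hdr using hex2
  have hnodl₁ : l₁.Nodup := by
    rw [← hc1]
    exact nodup_filterMap_of (children_nodup hH1 hnd1) (restrict_inj_of_nodup hnd1)
  have hnodl₂ : l₂.Nodup := by
    rw [← hc2]
    exact nodup_filterMap_of (children_nodup hH2 hnd2) (restrict_inj_of_nodup hnd2)
  have hcinj : Function.Injective c := by
    intro i i' h
    have h1 := hcr i
    have h2 := hcr i'
    rw [h] at h1
    have h3 : l₁.get i = l₁.get i' := Option.some_injective _ (h1.symm.trans h2)
    exact List.nodup_iff_injective_get.1 hnodl₁ h3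
  have hdinj : Function.Injective d := by
    intro j j' h
    have h1 := hdr j
    have h2 := hdr j'
    rw [h] at h1
    have h3 : l₂.get j = l₂.get j' := Option.some_injective _ (h1.symm.trans h2)
    exact List.nodup_iff_injective_get.1 hnodl₂ h3
  set F : Fin l₁.length → ETree L × ETree L := fun i => (c i, d (e i)) with hF
  have hFinj : Function.Injective F := by
    intro i i' h
    have := congrArg Prod.fst h
    exact hcinj this
  set M : Finset (ETree L × ETree L) := Finset.image F Finset.univ with hM
  refine ⟨M, ?_, ?_, ?_⟩
  · intro p hp
    obtain ⟨i, _, rfl⟩ := Finset.mem_image.1 hp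
    exact ⟨hcts i, hdus (e i)⟩
  · intro p hp q hq hne
    obtain ⟨i, _, rfl⟩ := Finset.mem_image.1 hp
    obtain ⟨i', _, rfl⟩ := Finset.mem_image.1 hq
    have hii : i ≠ i' := fun h => hne (by rw [h])
    constructor
    · intro h
      exact hii (hcinj h)
    · intro h
      exact hii (e.injective (hdinj h))
  · -- card bound
    have hblock : ∀ i : Fin l₁.length, (s ∩ labelSet (c i)).card ≤ rr (c i) (d (e i)) := by
      intro i
      set si : Finset L := s ∩ labelSet (c i) with hsi
      have hr1 : restrict (c i) si = some (l₁.get i) := by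
        rw [← hcr i]
        apply restrict_congr
        rw [hsi]
        ext a
        simp only [Finset.mem_inter]
        tauto
      have hlab1 : labelSet (l₁.get i) = si := by
        rw [labelSet_restrict_some (hcr i), hsi, Finset.inter_comm]
      have hlab2 : labelSet (l₂.get (e i)) = labelSet (d (e i)) ∩ s :=
        labelSet_restrict_some (hdr (e i))
      have hsi2 : si = labelSet (d (e i)) ∩ s := by
        rw [← hlab1, (hIso i).labelSet_eq, hlab2]
      have hr2 : restrict (d (e i)) si = some (l₂.get (e i)) := by
        rw [← hdr (e i)]
        apply restrict_congr
        rw [hsi2]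
        ext a
        simp only [Finset.mem_inter]
        tauto
      have hsub : si ⊆ labelSet (c i) ∩ labelSet (d (e i)) := by
        intro a ha
        refine Finset.mem_inter.2 ⟨(Finset.mem_inter.1 ha).2, ?_⟩
        rw [hsi2] at ha
        exact (Finset.mem_inter.1 ha).1
      have := le_rr hsub (by rw [hr1, hr2]; exact hIso i)
      exact this
    have hcover : s = Finset.univ.biUnion (fun i : Fin l₁.length => s ∩ labelSet (c i)) := by
      ext a
      simp only [Finset.mem_biUnion, Finset.mem_univ, true_and, Finset.mem_inter]
      constructor
      · intro ha
        obtain ⟨c', hc', hac'⟩ := mem_labelSet_node.1 (hs1 ha)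
        cases hres : restrict c' s with
        | none =>
            rw [restrict_eq_none_iff] at hres
            exact absurd hres (by
              rw [Finset.eq_empty_iff_forall_notMem]
              push_neg
              exact ⟨a, Finset.mem_inter.2 ⟨hac', ha⟩⟩)
        | some v =>
            have hv : v ∈ l₁ := by
              rw [← hc1]
              exact List.mem_filterMap.2 ⟨c', hc', hres⟩
            obtain ⟨i, rfl⟩ := List.mem_iff_get.1 hv
            have : c' = c i := restrict_inj_of_nodup hnd1 c' hc' (c i) (hcts i) _ hres (hcr i)
            exact ⟨i, ha, this ▸ hac'⟩
      · rintro ⟨i, ha, _⟩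
        exact ha
    have hdisjblocks : ∀ i ∈ (Finset.univ : Finset (Fin l₁.length)),
        ∀ j ∈ Finset.univ, i ≠ j →
        Disjoint (s ∩ labelSet (c i)) (s ∩ labelSet (c j)) := by
      intro i _ j _ hij
      have hd := disjoint_labels_of_mem hnd1 (hcts i) (hcts j) (fun h => hij (hcinj h))
      rw [Finset.disjoint_left] at hd ⊢
      intro a h1 h2
      exact hd (Finset.mem_inter.1 h1).2 (Finset.mem_inter.1 h2).2
    calc s.card = ∑ i : Fin l₁.length, (s ∩ labelSet (c i)).card := by
            conv_lhs => rw [hcover]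
            exact Finset.card_biUnion hdisjblocks
      _ ≤ ∑ i : Fin l₁.length, rr (c i) (d (e i)) := Finset.sum_le_sum (fun i _ => hblock i)
      _ = ∑ p ∈ M, rr p.1 p.2 := by
            rw [hM, Finset.sum_image (fun i _ j _ h => hFinj h)]

end ETree


namespace RootPath
variable {L : Type} [DecidableEq L]

theorem vert_homeo_nodup (P : RootPath L) (hev : ETree.IsEvolutionary P.tree) :
    ∀ i, 1 ≤ i → i ≤ P.len →
      ETree.Homeo (P.vert i) ∧ (ETree.labelList (P.vert i)).Nodup := by
  intro i
  induction i with
  | zero => intro h; omega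
  | succ n ih =>
      intro h1 h2
      rcases Nat.lt_or_ge n 1 with hle|hge
      · have : n = 0 := by omega
        subst this
        rw [P.first]
        exact ⟨hev.1, hev.2⟩
      · have hn2 : n ≤ P.len := by omega
        obtain ⟨hH, hnd⟩ := ih hge hn2
        have hstep := P.step n hge (by omega)
        obtain ⟨ts, hts⟩ := P.no_leaf n hge hn2
        rw [hts] at hstep hH hnd
        simp only [ETree.children] at hstep
        exact ⟨hH.of_mem hstep, ETree.nodup_of_mem hnd hstep⟩

end RootPath

open ETree in
/-- Let `S₁, S₂` be evolutionary trees with the same label set,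
`P' = x₁,…,x_{p'}` a root path of `S₁` with no leaf of `S₁`, and `Q' = y₁,…,y_{q'}` a
root path of `S₂` with no leaf of `S₂`.  For all `i < p'` and `j < q'` (regardless of
whether `(xᵢ,y_j)` is intersecting or not),
`rr(S₁^{xᵢ},S₂^{y_j}) = max { mm(Xᵢ,Y_j) + rr(S₁^{x_{i+1}},S₂^{y_{j+1}}),
mmb(Xᵢ∪{x_{i+1}}, Y_j∪{y_{j+1}}, x_{i+1}, y_{j+1}), rr(S₁^{xᵢ},S₂^{y_{j+1}}),
mm(xᵢ,Y_j), rr(S₁^{x_{i+1}},S₂^{y_j}), mm(Xᵢ,y_j) }`. -/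
theorem rr_recurrence {L : Type} [DecidableEq L] (P Q : RootPath L)
    (hS₁ : ETree.IsEvolutionary P.tree) (hS₂ : ETree.IsEvolutionary Q.tree)
    (hlab : ETree.labelSet P.tree = ETree.labelSet Q.tree)
    (i j : ℕ) (hi₁ : 1 ≤ i) (hi : i < P.len) (hj₁ : 1 ≤ j) (hj : j < Q.len) :
    rr (P.vert i) (Q.vert j) =
      max (mm (P.offPath i) (Q.offPath j) + rr (P.vert (i + 1)) (Q.vert (j + 1)))
      (max (mmb (insert (P.vert (i + 1)) (P.offPath i))
               (insert (Q.vert (j + 1)) (Q.offPath j))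
               (P.vert (i + 1)) (Q.vert (j + 1)))
      (max (rr (P.vert i) (Q.vert (j + 1)))
      (max (mm {P.vert i} (Q.offPath j))
      (max (rr (P.vert (i + 1)) (Q.vert j))
           (mm (P.offPath i) {Q.vert j}))))) := by
  classical
  obtain ⟨hHx, hndx⟩ := P.vert_homeo_nodup hS₁ i hi₁ (le_of_lt hi)
  obtain ⟨hHx', hndx'⟩ := P.vert_homeo_nodup hS₁ (i+1) (by omega) hi
  obtain ⟨hHy, hndy⟩ := Q.vert_homeo_nodup hS₂ j hj₁ (le_of_lt hj)
  obtain ⟨hHy', hndy'⟩ := Q.vert_homeo_nodup hS₂ (j+1) (by omega) hj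
  obtain ⟨tsx, htsx⟩ := P.no_leaf i hi₁ (le_of_lt hi)
  obtain ⟨tsy, htsy⟩ := Q.no_leaf j hj₁ (le_of_lt hj)
  have hstepx : P.vert (i+1) ∈ tsx := by
    have := P.step i hi₁ hi
    rw [htsx] at this
    simpa [ETree.children] using this
  have hstepy : Q.vert (j+1) ∈ tsy := by
    have := Q.step j hj₁ hj
    rw [htsy] at this
    simpa [ETree.children] using this
  have hoffx : P.offPath i = tsx.toFinset.erase (P.vert (i+1)) := by
    rw [RootPath.offPath, if_pos hi, htsx]
    rfl
  have hoffy : Q.offPath j = tsy.toFinset.erase (Q.vert (j+1)) := by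
    rw [RootPath.offPath, if_pos hj, htsy]
    rfl
  have hinsx : insert (P.vert (i+1)) (P.offPath i) = tsx.toFinset := by
    rw [hoffx]
    exact Finset.insert_erase (List.mem_toFinset.2 hstepx)
  have hinsy : insert (Q.vert (j+1)) (Q.offPath j) = tsy.toFinset := by
    rw [hoffy]
    exact Finset.insert_erase (List.mem_toFinset.2 hstepy)
  have hHnx : Homeo (ETree.node tsx) := htsx ▸ hHx
  have hHny : Homeo (ETree.node tsy) := htsy ▸ hHy
  have hndnx : (labelList (ETree.node tsx)).Nodup := htsx ▸ hndx
  have hndny : (labelList (ETree.node tsy)).Nodup := htsy ▸ hndy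
  have hsubx : labelSet (P.vert (i+1)) ⊆ labelSet (P.vert i) := by
    rw [htsx]
    exact labelSet_subset_of_mem hstepx
  have hsuby : labelSet (Q.vert (j+1)) ⊆ labelSet (Q.vert j) := by
    rw [htsy]
    exact labelSet_subset_of_mem hstepy
  -- global choice of optimal agreement sets
  choose σ hσsub hσcard hσiso using fun p : ETree L × ETree L => rr_spec p.1 p.2
  apply le_antisymm
  · refine rr_le ?_
    intro s hsub hiso
    have hs1 : s ⊆ labelSet (ETree.node tsx) := by
      intro a ha
      rw [← htsx]
      exact (Finset.mem_inter.1 (hsub ha)).1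
    have hs2 : s ⊆ labelSet (ETree.node tsy) := by
      intro a ha
      rw [← htsy]
      exact (Finset.mem_inter.1 (hsub ha)).2
    by_cases hs0 : s = ∅
    · rw [hs0]
      simp
    by_cases hA : s ⊆ labelSet (P.vert (i+1))
    · -- within x_{i+1}: bounded by T5
      have heq : restrict (P.vert i) s = restrict (P.vert (i+1)) s := by
        rw [htsx]
        exact restrict_subset_child hndnx hstepx hA
      have hle : s.card ≤ rr (P.vert (i+1)) (Q.vert j) := by
        refine le_rr ?_ ?_
        · intro a ha
          exact Finset.mem_inter.2 ⟨hA ha, (Finset.mem_inter.1 (hsub ha)).2⟩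
        · rw [← heq]
          exact hiso
      refine hle.trans ?_
      simp only [le_max_iff]
      right; right; right; right; left; exact le_refl _
    by_cases hB : ∃ d ∈ tsy, s ⊆ labelSet d
    · obtain ⟨d, hd, hsd⟩ := hB
      have heq : restrict (Q.vert j) s = restrict d s := by
        rw [htsy]
        exact restrict_subset_child hndny hd hsd
      by_cases hdq : d = Q.vert (j+1)
      · -- T3
        subst hdq
        have hle : s.card ≤ rr (P.vert i) (Q.vert (j+1)) := by
          refine le_rr ?_ ?_
          · intro a ha
            exact Finset.mem_inter.2 ⟨(Finset.mem_inter.1 (hsub ha)).1, hsd ha⟩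
          · rw [← heq]
            exact hiso
        refine hle.trans ?_
        simp only [le_max_iff]
        right; right; left; exact le_refl _
      · -- T4
        have hdoff : d ∈ Q.offPath j := by
          rw [hoffy]
          exact Finset.mem_erase.2 ⟨hdq, List.mem_toFinset.2 hd⟩
        have hle : s.card ≤ rr (P.vert i) d := by
          refine le_rr ?_ ?_
          · intro a ha
            exact Finset.mem_inter.2 ⟨(Finset.mem_inter.1 (hsub ha)).1, hsd ha⟩
          · rw [← heq]
            exact hiso
        have hmm : rr (P.vert i) d ≤ mm {P.vert i} (Q.offPath j) := by
          have := le_mm (M := {(P.vert i, d)})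
            (U := {P.vert i}) (V := Q.offPath j)
            (by intro p hp; rw [Finset.mem_singleton] at hp; subst hp
                exact ⟨Finset.mem_singleton_self _, hdoff⟩)
            (by intro p hp q hq hne
                rw [Finset.mem_singleton] at hp hq
                exact absurd (hp.trans hq.symm) hne)
          simpa using this
        refine (hle.trans hmm).trans ?_
        simp only [le_max_iff]
        right; right; right; left; exact le_refl _
    by_cases hC : ∃ c ∈ tsx, s ⊆ labelSet c
    · obtain ⟨c, hc, hsc⟩ := hC
      have hcx : c ≠ P.vert (i+1) := by
        intro h
        subst h
        exact hA hsc
      have hcoff : c ∈ P.offPath i := by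
        rw [hoffx]
        exact Finset.mem_erase.2 ⟨hcx, List.mem_toFinset.2 hc⟩
      have heq : restrict (P.vert i) s = restrict c s := by
        rw [htsx]
        exact restrict_subset_child hndnx hc hsc
      have hle : s.card ≤ rr c (Q.vert j) := by
        refine le_rr ?_ ?_
        · intro a ha
          exact Finset.mem_inter.2 ⟨hsc ha, (Finset.mem_inter.1 (hsub ha)).2⟩
        · rw [← heq]
          exact hiso
      have hmm : rr c (Q.vert j) ≤ mm (P.offPath i) {Q.vert j} := by
        have := le_mm (M := {(c, Q.vert j)})
          (U := P.offPath i) (V := {Q.vert j})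
          (by intro p hp; rw [Finset.mem_singleton] at hp; subst hp
              exact ⟨hcoff, Finset.mem_singleton_self _⟩)
          (by intro p hp q hq hne
              rw [Finset.mem_singleton] at hp hq
              exact absurd (hp.trans hq.symm) hne)
        simpa using this
      refine (hle.trans hmm).trans ?_
      simp only [le_max_iff]
      right; right; right; right; right; exact le_refl _
    · -- spread case
      rw [htsx, htsy, restrict_node, restrict_node] at hiso
      cases hl1 : tsx.filterMap (fun t => restrict t s) with
      | nil =>
          exfalso
          have hnone : restrict (ETree.node tsx) s = none := by
            rw [restrict_node, hl1]
            rfl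
          rw [restrict_eq_none_iff] at hnone
          apply hs0
          rw [Finset.eq_empty_iff_forall_notMem]
          intro a ha
          exact Finset.eq_empty_iff_forall_notMem.1 hnone a
            (Finset.mem_inter.2 ⟨hs1 ha, ha⟩)
      | cons u us1 =>
        cases us1 with
        | nil => exact absurd (subset_child_of_single hndnx hs1 hl1) hC
        | cons u' us2 =>
          cases hl2 : tsy.filterMap (fun t => restrict t s) with
          | nil =>
              exfalso
              have hnone : restrict (ETree.node tsy) s = none := by
                rw [restrict_node, hl2]
                rfl
              rw [restrict_eq_none_iff] at hnone
              apply hs0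
              rw [Finset.eq_empty_iff_forall_notMem]
              intro a ha
              exact Finset.eq_empty_iff_forall_notMem.1 hnone a
                (Finset.mem_inter.2 ⟨hs2 ha, ha⟩)
          | cons v vs1 =>
            cases vs1 with
            | nil => exact absurd (subset_child_of_single hndny hs2 hl2) hB
            | cons v' vs2 =>
              rw [hl1, hl2] at hiso
              have hiso2 : Iso (ETree.node (u :: u' :: us2)) (ETree.node (v :: v' :: vs2)) :=
                hiso
              cases Iso.node_inv hiso2 with
              | intro e h =>
                obtain ⟨M, hMc, hMi, hMcard⟩ := split_matching hHnx hHny hndnx hndny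
                  hs1 hs2 hl1 hl2 e h
                by_cases hpair : (P.vert (i+1), Q.vert (j+1)) ∈ M
                · -- T1
                  have hsplit : rr (P.vert (i+1)) (Q.vert (j+1)) +
                      ∑ p ∈ M.erase (P.vert (i+1), Q.vert (j+1)), rr p.1 p.2
                      = ∑ p ∈ M, rr p.1 p.2 :=
                    by convert Finset.add_sum_erase M (fun p => rr p.1 p.2) hpair
                  have herase : ∑ p ∈ M.erase (P.vert (i+1), Q.vert (j+1)), rr p.1 p.2
                      ≤ mm (P.offPath i) (Q.offPath j) := by
                    refine le_mm ?_ ?_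
                    · intro p hp
                      have hpM := Finset.mem_erase.1 hp
                      have hcoords := hMc p hpM.2
                      have hne := hMi p hpM.2 _ hpair hpM.1
                      constructor
                      · rw [hoffx]
                        exact Finset.mem_erase.2 ⟨hne.1, List.mem_toFinset.2 hcoords.1⟩
                      · rw [hoffy]
                        exact Finset.mem_erase.2 ⟨hne.2, List.mem_toFinset.2 hcoords.2⟩
                    · intro p hp q hq hne
                      exact hMi p (Finset.mem_erase.1 hp).2 q (Finset.mem_erase.1 hq).2 hne
                  have : s.card ≤ mm (P.offPath i) (Q.offPath j) +
                      rr (P.vert (i+1)) (Q.vert (j+1)) := by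
                    calc s.card ≤ ∑ p ∈ M, rr p.1 p.2 := hMcard
                      _ = rr (P.vert (i+1)) (Q.vert (j+1)) +
                          ∑ p ∈ M.erase (P.vert (i+1), Q.vert (j+1)), rr p.1 p.2 := hsplit.symm
                      _ ≤ rr (P.vert (i+1)) (Q.vert (j+1)) +
                          mm (P.offPath i) (Q.offPath j) := Nat.add_le_add_left herase _
                      _ = mm (P.offPath i) (Q.offPath j) +
                          rr (P.vert (i+1)) (Q.vert (j+1)) := Nat.add_comm _ _
                  refine this.trans ?_
                  simp only [le_max_iff]
                  left; exact le_refl _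
                · -- T2
                  have hbnd : ∑ p ∈ M, rr p.1 p.2 ≤
                      mmb (insert (P.vert (i + 1)) (P.offPath i))
                        (insert (Q.vert (j + 1)) (Q.offPath j))
                        (P.vert (i + 1)) (Q.vert (j + 1)) := by
                    refine le_mmb ?_ hMi hpair
                    intro p hp
                    have hcoords := hMc p hp
                    rw [hinsx, hinsy]
                    exact ⟨List.mem_toFinset.2 hcoords.1, List.mem_toFinset.2 hcoords.2⟩
                  refine (hMcard.trans hbnd).trans ?_
                  simp only [le_max_iff]
                  right; left; exact le_refl _
  · refine max_le ?_ (max_le ?_ (max_le ?_ (max_le ?_ (max_le ?_ ?_))))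
    · -- T1
      obtain ⟨M, hM1, hM2, hMsum⟩ := mm_spec (P.offPath i) (Q.offPath j)
      have hpairnot : (P.vert (i+1), Q.vert (j+1)) ∉ M := by
        intro hmem
        have := (hM1 _ hmem).1
        rw [hoffx] at this
        exact (Finset.mem_erase.1 this).1 rfl
      set M' := insert (P.vert (i+1), Q.vert (j+1)) M with hM'
      have hM'1 : ∀ p ∈ M', p.1 ∈ tsx ∧ p.2 ∈ tsy := by
        intro p hp
        rcases Finset.mem_insert.1 hp with rfl|hp
        · exact ⟨hstepx, hstepy⟩
        · constructor
          · have := (hM1 p hp).1; rw [hoffx] at this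
            exact List.mem_toFinset.1 (Finset.mem_erase.1 this).2
          · have := (hM1 p hp).2; rw [hoffy] at this
            exact List.mem_toFinset.1 (Finset.mem_erase.1 this).2
      have hM'2 : ∀ p ∈ M', ∀ q ∈ M', p ≠ q → p.1 ≠ q.1 ∧ p.2 ≠ q.2 := by
        intro p hp q hq hne
        rcases Finset.mem_insert.1 hp with rfl|hp' <;> rcases Finset.mem_insert.1 hq with rfl|hq'
        · exact absurd rfl hne
        · constructor
          · intro h
            have := (hM1 q hq').1
            rw [hoffx, ← h] at this
            exact (Finset.mem_erase.1 this).1 rfl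
          · intro h
            have := (hM1 q hq').2
            rw [hoffy, ← h] at this
            exact (Finset.mem_erase.1 this).1 rfl
        · constructor
          · intro h
            have := (hM1 p hp').1
            rw [hoffx, h] at this
            exact (Finset.mem_erase.1 this).1 rfl
          · intro h
            have := (hM1 p hp').2
            rw [hoffy, h] at this
            exact (Finset.mem_erase.1 this).1 rfl
        · exact hM2 p hp' q hq' hne
      obtain ⟨sg, hgsub, hgcard, hgiso⟩ := glue hHnx hHny hndnx hndny M' hM'1 hM'2 σ
        (fun p _ => hσsub p) (fun p _ => hσiso p)
      rw [← htsx, ← htsy] at hgsub hgiso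
      have hle := le_rr hgsub hgiso
      rw [hgcard, Finset.sum_insert hpairnot] at hle
      have e1 : (σ (P.vert (i+1), Q.vert (j+1))).card
          = rr (P.vert (i+1)) (Q.vert (j+1)) := hσcard _
      have e2 : ∑ p ∈ M, (σ p).card = ∑ p ∈ M, rr p.1 p.2 :=
        Finset.sum_congr rfl (fun p _ => hσcard p)
      rw [e1, e2, ← hMsum, Nat.add_comm] at hle
      exact hle
    · -- T2
      obtain ⟨M, hM1, hM2, hMno, hMsum⟩ := mmb_spec (insert (P.vert (i+1)) (P.offPath i))
        (insert (Q.vert (j+1)) (Q.offPath j)) (P.vert (i+1)) (Q.vert (j+1))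
      have hM1' : ∀ p ∈ M, p.1 ∈ tsx ∧ p.2 ∈ tsy := by
        intro p hp
        constructor
        · have := (hM1 p hp).1; rw [hinsx] at this; exact List.mem_toFinset.1 this
        · have := (hM1 p hp).2; rw [hinsy] at this; exact List.mem_toFinset.1 this
      obtain ⟨sg, hgsub, hgcard, hgiso⟩ := glue hHnx hHny hndnx hndny M hM1' hM2 σ
        (fun p _ => hσsub p) (fun p _ => hσiso p)
      rw [← htsx, ← htsy] at hgsub hgiso
      have hle := le_rr hgsub hgiso
      have e2 : ∑ p ∈ M, (σ p).card = ∑ p ∈ M, rr p.1 p.2 :=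
        Finset.sum_congr rfl (fun p _ => hσcard p)
      rw [hgcard, e2, ← hMsum] at hle
      exact hle
    · -- T3
      obtain ⟨sg, hgsub, hgcard, hgiso⟩ := rr_spec (P.vert i) (Q.vert (j+1))
      have hsg2 : sg ⊆ labelSet (Q.vert (j+1)) := fun a ha =>
        (Finset.mem_inter.1 (hgsub ha)).2
      have heq : restrict (Q.vert j) sg = restrict (Q.vert (j+1)) sg := by
        rw [htsy]
        exact restrict_subset_child hndny hstepy hsg2
      refine le_of_eq_of_le hgcard.symm (le_rr ?_ ?_)
      · intro a ha
        exact Finset.mem_inter.2 ⟨(Finset.mem_inter.1 (hgsub ha)).1, hsuby (hsg2 ha)⟩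
      · rw [heq]; exact hgiso
    · -- T4
      obtain ⟨M, hM1, hM2, hMsum⟩ := mm_spec {P.vert i} (Q.offPath j)
      rcases Finset.eq_empty_or_nonempty M with rfl|⟨p, hp⟩
      · rw [hMsum]; simp
      · have hMsing : M = {p} := by
          apply Finset.eq_singleton_iff_unique_mem.2
          refine ⟨hp, fun q hq => ?_⟩
          by_contra hne
          have h1 := (hM1 q hq).1
          have h2 := (hM1 p hp).1
          simp only [Finset.mem_singleton] at h1 h2
          exact (hM2 q hq p hp hne).1 (h1.trans h2.symm)
        have hp1 : p.1 = P.vert i := by simpa using (hM1 p hp).1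
        have hp2 : p.2 ∈ tsy := by
          have := (hM1 p hp).2; rw [hoffy] at this
          exact List.mem_toFinset.1 (Finset.mem_erase.1 this).2
        obtain ⟨sg, hgsub, hgcard, hgiso⟩ := rr_spec p.1 p.2
        have hsg2 : sg ⊆ labelSet p.2 := fun a ha => (Finset.mem_inter.1 (hgsub ha)).2
        have heq : restrict (Q.vert j) sg = restrict p.2 sg := by
          rw [htsy]
          exact restrict_subset_child hndny hp2 hsg2
        have hle : sg.card ≤ rr (P.vert i) (Q.vert j) := by
          refine le_rr ?_ ?_
          · intro a ha
            have h' := Finset.mem_inter.1 (hgsub ha)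
            refine Finset.mem_inter.2 ⟨?_, ?_⟩
            · rw [← hp1]; exact h'.1
            · rw [htsy]; exact labelSet_subset_of_mem hp2 (hsg2 ha)
          · rw [heq, ← hp1]
            exact hgiso
        have hmmval : mm {P.vert i} (Q.offPath j) = rr p.1 p.2 := by
          rw [hMsum, hMsing, Finset.sum_singleton]
        rw [hmmval, ← hgcard]
        exact hle
    · -- T5
      obtain ⟨sg, hgsub, hgcard, hgiso⟩ := rr_spec (P.vert (i+1)) (Q.vert j)
      have hsg1 : sg ⊆ labelSet (P.vert (i+1)) := fun a ha =>
        (Finset.mem_inter.1 (hgsub ha)).1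
      have heq : restrict (P.vert i) sg = restrict (P.vert (i+1)) sg := by
        rw [htsx]
        exact restrict_subset_child hndnx hstepx hsg1
      refine le_of_eq_of_le hgcard.symm (le_rr ?_ ?_)
      · intro a ha
        exact Finset.mem_inter.2 ⟨hsubx (hsg1 ha), (Finset.mem_inter.1 (hgsub ha)).2⟩
      · rw [heq]; exact hgiso
    · -- T6
      obtain ⟨M, hM1, hM2, hMsum⟩ := mm_spec (P.offPath i) {Q.vert j}
      rcases Finset.eq_empty_or_nonempty M with rfl|⟨p, hp⟩
      · rw [hMsum]; simp
      · have hMsing : M = {p} := by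
          apply Finset.eq_singleton_iff_unique_mem.2
          refine ⟨hp, fun q hq => ?_⟩
          by_contra hne
          have h1 := (hM1 q hq).2
          have h2 := (hM1 p hp).2
          simp only [Finset.mem_singleton] at h1 h2
          exact (hM2 q hq p hp hne).2 (h1.trans h2.symm)
        have hp2 : p.2 = Q.vert j := by simpa using (hM1 p hp).2
        have hp1 : p.1 ∈ tsx := by
          have := (hM1 p hp).1; rw [hoffx] at this
          exact List.mem_toFinset.1 (Finset.mem_erase.1 this).2
        obtain ⟨sg, hgsub, hgcard, hgiso⟩ := rr_spec p.1 p.2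
        have hsg1 : sg ⊆ labelSet p.1 := fun a ha => (Finset.mem_inter.1 (hgsub ha)).1
        have heq : restrict (P.vert i) sg = restrict p.1 sg := by
          rw [htsx]
          exact restrict_subset_child hndnx hp1 hsg1
        have hle : sg.card ≤ rr (P.vert i) (Q.vert j) := by
          refine le_rr ?_ ?_
          · intro a ha
            have h' := Finset.mem_inter.1 (hgsub ha)
            refine Finset.mem_inter.2 ⟨?_, ?_⟩
            · rw [htsx]; exact labelSet_subset_of_mem hp1 (hsg1 ha)
            · rw [← hp2]; exact h'.2
          · rw [heq, ← hp2]
            exact hgiso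
        have hmmval : mm (P.offPath i) {Q.vert j} = rr p.1 p.2 := by
          rw [hMsum, hMsing, Finset.sum_singleton]
        rw [hmmval, ← hgcard]
        exact hle
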